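/- Let ϖ₂(z) = log²z + 2·ϖ̃₁(z)·log z + ϖ̃₂(z) for real z ∈ (0, 1/27), where ϖ̃₁(z) = ∑_{j≥1} 3·(3j−1)!/(j!)³·(−z)^j and ϖ̃₂(z) = ∑_{j≥1} 18·(3j−1)!/(j!)³·(H_{3j−1} − H_j)·(−z)^j with H_k the k-th harmonic number, and let θ denote the differential operator θf(z) = z·f′(z). Then ϖ₂ satisfies the Picard–Fuchs equation θ³ϖ₂(z) + 3z·(3θ+2)(3θ+1)θ ϖ₂(z) = 0 for all z ∈ (0, 1/27). -/

import Mathlib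

open Real Filter

/-- The `k`-th harmonic number `H_k = ∑_{i=1}^k 1/i`. -/
noncomputable def harmonicNum (k : ℕ) : ℝ := ∑ i ∈ Finset.range k, (1 : ℝ) / (i + 1)

/-- The coefficients `c_j = 3 (3j-1)! / (j!)^3` of the logarithmic period of local P². -/
noncomputable def localP2c (j : ℕ) : ℝ :=
  3 * (Nat.factorial (3 * j - 1) : ℝ) / ((Nat.factorial j : ℝ)) ^ 3

/-- The coefficients `d_j = 18 (3j-1)! / (j!)^3 (H_{3j-1} - H_j)`. -/
noncomputable def localP2d (j : ℕ) : ℝ :=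
  18 * (Nat.factorial (3 * j - 1) : ℝ) / ((Nat.factorial j : ℝ)) ^ 3 *
    (harmonicNum (3 * j - 1) - harmonicNum j)

/-- The power-series part `ϖ̃₁(z) = ∑_{j ≥ 1} c_j (-z)^j` of the logarithmic period. -/
noncomputable def w1tilde (z : ℝ) : ℝ := ∑' j : ℕ, localP2c (j + 1) * (-z) ^ (j + 1)

/-- The power-series part `ϖ̃₂(z) = ∑_{j ≥ 1} d_j (-z)^j` of the double-logarithmic
period. -/
noncomputable def w2tilde (z : ℝ) : ℝ := ∑' j : ℕ, localP2d (j + 1) * (-z) ^ (j + 1)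

/-- The double-logarithmic period `ϖ₂(z) = log² z + 2 ϖ̃₁(z) log z + ϖ̃₂(z)`. -/
noncomputable def w2 (z : ℝ) : ℝ :=
  (Real.log z) ^ 2 + 2 * w1tilde z * Real.log z + w2tilde z

/-- The operator `θ = z d/dz`. -/
noncomputable def theta (f : ℝ → ℝ) : ℝ → ℝ := fun z => z * deriv f z

/-- `(3θ+1)θ` applied to `ϖ₂`. -/
noncomputable def pf1 : ℝ → ℝ := fun z => 3 * theta (theta w2) z + theta w2 z

/-- `(3θ+2)(3θ+1)θ` applied to `ϖ₂`. -/
noncomputable def pf2 : ℝ → ℝ := fun z => 3 * theta pf1 z + 2 * pf1 z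








/- coefficient sequences -/
noncomputable def cv (j : ℕ) : ℝ := (-1) ^ (j + 1) * localP2c (j + 1)
noncomputable def cw (j : ℕ) : ℝ := (-1) ^ (j + 1) * localP2d (j + 1)

lemma fact_cast_pos (n : ℕ) : (0:ℝ) < (Nat.factorial n : ℝ) := by
  exact_mod_cast Nat.factorial_pos n

lemma c_rec (j : ℕ) : ((j:ℝ)+2)^3 * localP2c (j+2)
    = 3*((j:ℝ)+1)*(3*(j:ℝ)+4)*(3*(j:ℝ)+5) * localP2c (j+1) := by
  unfold localP2c
  have h1 : 3 * (j+2) - 1 = 3*j+5 := by omega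
  have h2 : 3 * (j+1) - 1 = 3*j+2 := by omega
  rw [h1, h2]
  have e5 : Nat.factorial (3*j+5) = (3*j+5) * Nat.factorial (3*j+4) := by
    rw [show 3*j+5 = (3*j+4)+1 by ring]; exact Nat.factorial_succ _
  have e4 : Nat.factorial (3*j+4) = (3*j+4) * Nat.factorial (3*j+3) := by
    rw [show 3*j+4 = (3*j+3)+1 by ring]; exact Nat.factorial_succ _
  have e3 : Nat.factorial (3*j+3) = (3*j+3) * Nat.factorial (3*j+2) := by
    rw [show 3*j+3 = (3*j+2)+1 by ring]; exact Nat.factorial_succ _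
  have ej : Nat.factorial (j+2) = (j+2) * Nat.factorial (j+1) := by
    rw [show j+2 = (j+1)+1 by ring]; exact Nat.factorial_succ _
  rw [e5, e4, e3, ej]
  have hf1 := (fact_cast_pos (3*j+2)).ne'
  have hf2 := (fact_cast_pos (j+1)).ne'
  have hj2 : ((j:ℝ)+2) ≠ 0 := by positivity
  push_cast
  field_simp

lemma c_nonneg (k : ℕ) : 0 ≤ localP2c k := by
  unfold localP2c
  positivity

lemma localP2c_one : localP2c 1 = 6 := by
  norm_num [localP2c, Nat.factorial]

lemma c_le (j : ℕ) : localP2c (j+1) ≤ 6 * 27 ^ j := by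
  induction j with
  | zero => simp [localP2c_one]
  | succ n ih =>
    have hrec := c_rec n
    have hpos : (0:ℝ) < ((n:ℝ)+2)^3 := by positivity
    have h1 : localP2c (n+2) ≤ 27 * localP2c (n+1) := by
      have hA : 3*((n:ℝ)+1)*(3*(n:ℝ)+4)*(3*(n:ℝ)+5) ≤ 27 * ((n:ℝ)+2)^3 := by
        nlinarith [sq_nonneg ((n:ℝ)+1), (Nat.cast_nonneg n : (0:ℝ) ≤ n)]
      have hc := c_nonneg (n+1)
      nlinarith [c_nonneg (n+2)]
    calc localP2c (n+1+1) ≤ 27 * localP2c (n+1) := h1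
      _ ≤ 27 * (6 * 27 ^ n) := by nlinarith
      _ = 6 * 27 ^ (n+1) := by ring

lemma harmonic_succ' (k : ℕ) : harmonicNum (k+1) = harmonicNum k + 1/((k:ℝ)+1) := by
  unfold harmonicNum
  rw [Finset.sum_range_succ]

lemma harmonic_mono {a b : ℕ} (h : a ≤ b) : harmonicNum a ≤ harmonicNum b := by
  unfold harmonicNum
  apply Finset.sum_le_sum_of_subset_of_nonneg (Finset.range_subset_range.2 h)
  intro i _ _
  positivity

lemma harmonic_diff_le (j : ℕ) : harmonicNum (3*j+2) - harmonicNum (j+1) ≤ 2 := by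
  have hsub : j+1 ≤ 3*j+2 := by omega
  have hsplit : harmonicNum (3*j+2) - harmonicNum (j+1)
      = ∑ i ∈ Finset.Ico (j+1) (3*j+2), (1:ℝ)/(i+1) := by
    unfold harmonicNum
    rw [Finset.range_eq_Ico,
      ← Finset.sum_Ico_consecutive (fun i => (1:ℝ)/(i+1)) (Nat.zero_le (j+1)) hsub]
    rw [Finset.range_eq_Ico]
    ring
  rw [hsplit]
  have hcard : (Finset.Ico (j+1) (3*j+2)).card = 2*j+1 := by
    rw [Nat.card_Ico]; omega
  have hle : ∑ i ∈ Finset.Ico (j+1) (3*j+2), (1:ℝ)/(i+1)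
      ≤ (Finset.Ico (j+1) (3*j+2)).card • (1/((j:ℝ)+2)) := by
    apply Finset.sum_le_card_nsmul
    intro i hi
    rw [Finset.mem_Ico] at hi
    have : (j:ℝ)+2 ≤ (i:ℝ)+1 := by
      have : (j+1:ℕ) ≤ i := hi.1
      have := (Nat.cast_le (α := ℝ)).2 this
      push_cast at this ⊢
      linarith
    apply div_le_div_of_nonneg_left (by norm_num) (by positivity) this
  rw [hcard] at hle
  refine hle.trans ?_
  rw [nsmul_eq_mul]
  push_cast
  have hj : (0:ℝ) < (j:ℝ)+2 := by positivity
  rw [mul_one_div, div_le_iff₀ hj]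
  nlinarith [Nat.cast_nonneg (α := ℝ) j]

lemma d_eq (k : ℕ) : localP2d k = 6 * localP2c k * (harmonicNum (3*k-1) - harmonicNum k) := by
  unfold localP2d localP2c
  ring

lemma hdiff_nonneg (j : ℕ) : 0 ≤ harmonicNum (3*j+2) - harmonicNum (j+1) := by
  have := harmonic_mono (show j+1 ≤ 3*j+2 by omega)
  linarith

lemma d_abs_le (j : ℕ) : |localP2d (j+1)| ≤ 72 * 27 ^ j := by
  have h3 : 3*(j+1)-1 = 3*j+2 := by omega
  have hd := d_eq (j+1)
  rw [h3] at hd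
  have h0 := hdiff_nonneg j
  have h2 := harmonic_diff_le j
  have hc0 := c_nonneg (j+1)
  have hcle := c_le j
  have hnn : 0 ≤ localP2d (j+1) := by rw [hd]; positivity
  rw [abs_of_nonneg hnn, hd]
  nlinarith [pow_pos (show (0:ℝ) < 27 by norm_num) j]

lemma cv_abs (j : ℕ) : |cv j| = localP2c (j+1) := by
  unfold cv
  rw [abs_mul, abs_pow, abs_neg, abs_one, one_pow, one_mul, abs_of_nonneg (c_nonneg _)]

lemma cw_abs_le (j : ℕ) : |cw j| ≤ 72 * 27 ^ j := by
  unfold cw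
  rw [abs_mul, abs_pow, abs_neg, abs_one, one_pow, one_mul]
  exact d_abs_le j

/- Recurrences -/
lemma R1 (j : ℕ) : ((j:ℝ)+2)^3 * cv (j+1) + 3*((j:ℝ)+1)*(3*(j:ℝ)+4)*(3*(j:ℝ)+5) * cv j = 0 := by
  unfold cv
  linear_combination (-(-1:ℝ)^(j+1)) * c_rec j

lemma R2 (j : ℕ) : ((j:ℝ)+2)^3 * cw (j+1) + 3*((j:ℝ)+1)*(3*(j:ℝ)+4)*(3*(j:ℝ)+5) * cw j
    + 6*((j:ℝ)+2)^2 * cv (j+1) + 6*(27*((j:ℝ)+1)^2+18*((j:ℝ)+1)+2) * cv j = 0 := by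
  have h35 : 3*(j+2)-1 = 3*j+5 := by omega
  have h32 : 3*(j+1)-1 = 3*j+2 := by omega
  have hd2 := d_eq (j+2); rw [h35] at hd2
  have hd1 := d_eq (j+1); rw [h32] at hd1
  have hh5 : harmonicNum (3*j+5) = harmonicNum (3*j+2)
      + (1/(3*(j:ℝ)+3) + 1/(3*(j:ℝ)+4) + 1/(3*(j:ℝ)+5)) := by
    rw [show 3*j+5 = (3*j+4)+1 by ring, harmonic_succ', show 3*j+4 = (3*j+3)+1 by ring,
      harmonic_succ', show 3*j+3 = (3*j+2)+1 by ring, harmonic_succ']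
    push_cast; ring
  have hh2 : harmonicNum (j+2) = harmonicNum (j+1) + 1/((j:ℝ)+2) := by
    rw [show j+2 = (j+1)+1 by ring, harmonic_succ']; push_cast; ring
  have hj2 : ((j:ℝ)+2) ≠ 0 := by positivity
  have hC2 : localP2c (j+2) = 3*((j:ℝ)+1)*(3*(j:ℝ)+4)*(3*(j:ℝ)+5) * localP2c (j+1)
      / (((j:ℝ)+2)^3) := by
    have h := c_rec j
    field_simp
    linarith
  have h33 : (3*(j:ℝ)+3) ≠ 0 := by positivity
  have h34 : (3*(j:ℝ)+4) ≠ 0 := by positivity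
  have h35' : (3*(j:ℝ)+5) ≠ 0 := by positivity
  unfold cw cv
  rw [hd2, hd1, hh5, hh2, hC2]
  field_simp
  ring

noncomputable def S (u : ℕ → ℝ) (z : ℝ) : ℝ := ∑' j : ℕ, u j * z ^ (j + 1)

noncomputable def D (u : ℕ → ℝ) : ℕ → ℝ := fun j => ((j:ℝ) + 1) * u j

def Good (u : ℕ → ℝ) : Prop :=
  ∀ r : ℝ, 0 < r → r < 1 / 27 → Summable (fun j => |u j| * r ^ j)

lemma good_bound {u : ℕ → ℝ} (hu : Good u) {r : ℝ} (hr0 : 0 < r) (hr : r < 1/27) :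
    ∃ M : ℝ, ∀ j, |u j| * r ^ j ≤ M := by
  refine ⟨∑' j, |u j| * r ^ j, fun j => ?_⟩
  exact Summable.le_tsum (hu r hr0 hr) j (fun i _ => by positivity)

lemma good_D {u : ℕ → ℝ} (hu : Good u) : Good (D u) := by
  intro r hr0 hr
  set r' : ℝ := (r + 1/27) / 2 with hr'def
  have hr'0 : 0 < r' := by positivity
  have hr'lt : r' < 1/27 := by rw [hr'def]; linarith
  have hrr' : r < r' := by rw [hr'def]; linarith
  obtain ⟨M, hM⟩ := good_bound hu hr'0 hr'lt
  have hx : |r / r'| < 1 := by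
    rw [abs_of_nonneg (by positivity)]
    rw [div_lt_one hr'0]; exact hrr'
  have hsum : Summable (fun j : ℕ => M * (((j:ℝ)+1) * (r/r') ^ j)) := by
    apply Summable.mul_left
    have h1 : Summable (fun j : ℕ => (j:ℝ) * (r/r') ^ j) := by
      simpa using summable_pow_mul_geometric_of_norm_lt_one (R := ℝ) 1 hx
    have h2 : Summable (fun j : ℕ => (r/r') ^ j) := summable_geometric_of_lt_one (by positivity) (by
      rwa [abs_of_nonneg (by positivity)] at hx)
    simpa [add_mul] using h1.add h2
  apply Summable.of_nonneg_of_le (fun j => by positivity) _ hsum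
  intro j
  have hM' := hM j
  have hrj : r ^ j = (r/r')^j * r'^j := by
    rw [← mul_pow]; congr 1; field_simp
  have : |D u j| * r ^ j = ((j:ℝ)+1) * (r/r')^j * (|u j| * r'^j) := by
    unfold D
    rw [abs_mul, abs_of_nonneg (by positivity : (0:ℝ) ≤ (j:ℝ)+1), hrj]
    ring
  rw [this]
  have h1 : (0:ℝ) ≤ ((j:ℝ)+1) * (r/r')^j := by positivity
  calc ((j:ℝ)+1) * (r/r')^j * (|u j| * r'^j) ≤ ((j:ℝ)+1) * (r/r')^j * M := by
        apply mul_le_mul_of_nonneg_left hM' h1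
    _ = M * (((j:ℝ)+1) * (r/r')^j) := by ring

lemma summable_S {u : ℕ → ℝ} (hu : Good u) {z : ℝ} (hz : |z| < 1/27) :
    Summable (fun j => u j * z ^ (j+1)) := by
  set r : ℝ := (|z| + 1/27) / 2 with hrdef
  have hr0 : 0 < r := by have := abs_nonneg z; rw [hrdef]; linarith
  have hrlt : r < 1/27 := by rw [hrdef]; linarith
  have hzr : |z| ≤ r := by rw [hrdef]; linarith
  apply Summable.of_norm
  apply Summable.of_nonneg_of_le (fun j => norm_nonneg _) _ ((hu r hr0 hrlt).mul_left r)
  intro j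
  have : ‖u j * z ^ (j+1)‖ = |u j| * |z| ^ (j+1) := by
    rw [norm_mul, norm_pow]; rfl
  rw [this]
  calc |u j| * |z| ^ (j+1) ≤ |u j| * r ^ (j+1) := by
        apply mul_le_mul_of_nonneg_left (pow_le_pow_left₀ (abs_nonneg z) hzr _) (abs_nonneg _)
    _ = r * (|u j| * r ^ j) := by ring

lemma good_add {u v : ℕ → ℝ} (hu : Good u) (hv : Good v) : Good (fun j => u j + v j) := by
  intro r hr0 hr
  apply Summable.of_nonneg_of_le (fun j => by positivity) _ ((hu r hr0 hr).add (hv r hr0 hr))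
  intro j
  have := abs_add_le (u j) (v j)
  have hrj : (0:ℝ) ≤ r ^ j := by positivity
  calc |u j + v j| * r ^ j ≤ (|u j| + |v j|) * r ^ j := by nlinarith
    _ = |u j| * r ^ j + |v j| * r ^ j := by ring

lemma good_smul (c : ℝ) {u : ℕ → ℝ} (hu : Good u) : Good (fun j => c * u j) := by
  intro r hr0 hr
  have := (hu r hr0 hr).mul_left |c|
  apply Summable.congr this
  intro j
  rw [abs_mul]; ring

lemma hasDerivAt_S {u : ℕ → ℝ} (hu : Good u) {z : ℝ} (hz : |z| < 1/27) :
    HasDerivAt (S u) (∑' j : ℕ, ((j:ℝ)+1) * u j * z ^ j) z := by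
  set r : ℝ := (|z| + 1/27) / 2 with hrdef
  have hr0 : 0 < r := by have := abs_nonneg z; rw [hrdef]; linarith
  have hrlt : r < 1/27 := by rw [hrdef]; linarith
  have hzr : |z| < r := by rw [hrdef]; linarith
  have hopen : IsOpen (Set.Ioo (-r) r) := isOpen_Ioo
  have hmem : z ∈ Set.Ioo (-r) r := abs_lt.1 hzr
  have hsum' : Summable (fun j : ℕ => ((j:ℝ)+1) * |u j| * r ^ j) := by
    apply Summable.congr (good_D hu r hr0 hrlt)
    intro j
    unfold D
    rw [abs_mul, abs_of_nonneg (by positivity : (0:ℝ) ≤ (j:ℝ)+1)]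
  apply hasDerivAt_of_tendstoUniformlyOn (l := atTop) hopen
    (f := fun n z => ∑ j ∈ Finset.range n, u j * z ^ (j+1))
    (f' := fun n z => ∑ j ∈ Finset.range n, ((j:ℝ)+1) * u j * z ^ j)
    (g' := fun z => ∑' j : ℕ, ((j:ℝ)+1) * u j * z ^ j)
  · apply tendstoUniformlyOn_tsum_nat hsum'
    intro j x hx
    have hxr : |x| ≤ r := by
      rcases hx with ⟨h1, h2⟩; rw [abs_le]; constructor <;> linarith
    have : ‖((j:ℝ)+1) * u j * x ^ j‖ = ((j:ℝ)+1) * |u j| * |x| ^ j := by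
      rw [norm_mul, norm_mul, norm_pow, Real.norm_eq_abs, Real.norm_eq_abs, Real.norm_eq_abs,
        abs_of_nonneg (by positivity : (0:ℝ) ≤ (j:ℝ)+1)]
    rw [this]
    apply mul_le_mul_of_nonneg_left (pow_le_pow_left₀ (abs_nonneg x) hxr _) (by positivity)
  · filter_upwards with n x _
    apply HasDerivAt.fun_sum
    intro j _
    have h := (hasDerivAt_pow (j+1) x).const_mul (u j)
    simp only [Nat.add_sub_cancel] at h
    refine h.congr_deriv ?_
    push_cast
    ring
  · intro x hx
    have hxlt : |x| < 1/27 := by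
      rcases hx with ⟨h1, h2⟩
      rw [abs_lt]; constructor <;> linarith
    exact (summable_S hu hxlt).hasSum.tendsto_sum_nat
  · exact hmem

lemma theta_S {u : ℕ → ℝ} (hu : Good u) {z : ℝ} (hz : |z| < 1/27) :
    z * (∑' j : ℕ, ((j:ℝ)+1) * u j * z ^ j) = S (D u) z := by
  unfold S D
  rw [← tsum_mul_left]
  apply tsum_congr
  intro j
  ring

lemma S_comb (a b : ℝ) {x y : ℕ → ℝ} (hx : Good x) (hy : Good y) {z : ℝ} (hz : |z| < 1/27) :
    S (fun j => a * x j + b * y j) z = a * S x z + b * S y z := by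
  unfold S
  rw [← tsum_mul_left, ← tsum_mul_left, ← Summable.tsum_add ((summable_S hx hz).mul_left a)
    ((summable_S hy hz).mul_left b)]
  apply tsum_congr; intro j; ring

noncomputable def shiftc (u : ℕ → ℝ) : ℕ → ℝ := fun j => match j with
  | 0 => 0
  | Nat.succ i => u i

lemma good_shiftc {u : ℕ → ℝ} (hu : Good u) : Good (shiftc u) := by
  intro r hr0 hr
  rw [← summable_nat_add_iff 1]
  apply Summable.congr ((hu r hr0 hr).mul_left r)
  intro j
  show r * (|u j| * r ^ j) = |shiftc u (j+1)| * r ^ (j+1)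
  show r * (|u j| * r ^ j) = |u j| * r ^ (j+1)
  ring

lemma S_shiftc {u : ℕ → ℝ} (hu : Good u) {z : ℝ} (hz : |z| < 1/27) :
    S (shiftc u) z = z * S u z := by
  unfold S
  rw [Summable.tsum_eq_zero_add (summable_S (good_shiftc hu) hz)]
  show shiftc u 0 * z ^ 1 + (∑' j : ℕ, u j * z ^ (j+1+1)) = z * ∑' j : ℕ, u j * z ^ (j+1)
  rw [← tsum_mul_left]
  show (0:ℝ) * z ^ 1 + _ = _
  rw [zero_mul, zero_add]
  apply tsum_congr; intro j; ring

noncomputable def econst (c : ℝ) : ℕ → ℝ := fun j => if j = 0 then c else 0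

lemma good_econst (c : ℝ) : Good (econst c) := by
  intro r hr0 hr
  apply summable_of_ne_finset_zero (s := {0})
  intro j hj
  simp only [Finset.mem_singleton] at hj
  simp [econst, hj]

lemma S_econst (c : ℝ) (z : ℝ) : S (econst c) z = c * z := by
  unfold S
  rw [tsum_eq_single 0]
  · simp [econst]
  · intro j hj
    simp [econst, hj]








lemma good_cv : Good cv := by
  intro r hr0 hr
  have hgeo : Summable (fun j : ℕ => 6 * (27*r) ^ j) := by
    apply Summable.mul_left
    exact summable_geometric_of_lt_one (by positivity) (by linarith)
  apply Summable.of_nonneg_of_le (fun j => by positivity) _ hgeo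
  intro j
  rw [cv_abs]
  calc localP2c (j+1) * r ^ j ≤ 6 * 27 ^ j * r ^ j := by
        apply mul_le_mul_of_nonneg_right (c_le j) (by positivity)
    _ = 6 * (27*r) ^ j := by rw [mul_pow]; ring

lemma good_cw : Good cw := by
  intro r hr0 hr
  have hgeo : Summable (fun j : ℕ => 72 * (27*r) ^ j) := by
    apply Summable.mul_left
    exact summable_geometric_of_lt_one (by positivity) (by linarith)
  apply Summable.of_nonneg_of_le (fun j => by positivity) _ hgeo
  intro j
  calc |cw j| * r ^ j ≤ 72 * 27 ^ j * r ^ j := by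
        apply mul_le_mul_of_nonneg_right (cw_abs_le j) (by positivity)
    _ = 72 * (27*r) ^ j := by rw [mul_pow]; ring

lemma w1tilde_eq : w1tilde = S cv := by
  funext z
  unfold w1tilde S cv
  apply tsum_congr
  intro j
  rw [neg_pow]
  ring

lemma w2tilde_eq : w2tilde = S cw := by
  funext z
  unfold w2tilde S cw
  apply tsum_congr
  intro j
  rw [neg_pow]
  ring

noncomputable def Phi (k₀ k₁ : ℝ) (x y : ℕ → ℝ) (z : ℝ) : ℝ :=
  k₀ + k₁ * Real.log z + 2 * S x z * Real.log z + S y z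

lemma theta_congr {f g : ℝ → ℝ} (h : ∀ w ∈ Set.Ioo (0:ℝ) (1/27), f w = g w) {z : ℝ}
    (hz : z ∈ Set.Ioo (0:ℝ) (1/27)) : theta f z = theta g z := by
  unfold theta
  congr 1
  apply Filter.EventuallyEq.deriv_eq
  filter_upwards [isOpen_Ioo.mem_nhds hz] with w hw using h w hw

lemma S_split (a : ℝ) {u v : ℕ → ℝ} (hu : Good u) (hv : Good v) {z : ℝ} (hz : |z| < 1/27) :
    S (fun j => a * u j + v j) z = a * S u z + S v z := by
  have h := S_comb a 1 hu hv hz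
  simpa using h

lemma theta_Phi (k₀ k₁ : ℝ) {x y : ℕ → ℝ} (hx : Good x) (hy : Good y) {z : ℝ}
    (hz : z ∈ Set.Ioo (0:ℝ) (1/27)) :
    theta (Phi k₀ k₁ x y) z = Phi k₁ 0 (D x) (fun j => 2 * x j + D y j) z := by
  obtain ⟨hz0, hz1⟩ := hz
  have hzne : z ≠ 0 := ne_of_gt hz0
  have hzabs : |z| < 1/27 := by rw [abs_of_pos hz0]; exact hz1
  have hdx := hasDerivAt_S hx hzabs
  have hdy := hasDerivAt_S hy hzabs
  have hlog := Real.hasDerivAt_log hzne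
  have hD : HasDerivAt (Phi k₀ k₁ x y)
      (k₁ * z⁻¹ + ((2 * (∑' j : ℕ, ((j:ℝ)+1) * x j * z ^ j)) * Real.log z + (2 * S x z) * z⁻¹)
        + (∑' j : ℕ, ((j:ℝ)+1) * y j * z ^ j)) z := by
    unfold Phi
    have h1 : HasDerivAt (fun w => k₀ + k₁ * Real.log w) (k₁ * z⁻¹) z := by
      simpa using (hlog.const_mul k₁).const_add k₀
    have h2 : HasDerivAt (fun w => 2 * S x w * Real.log w)
        ((2 * (∑' j : ℕ, ((j:ℝ)+1) * x j * z ^ j)) * Real.log z + (2 * S x z) * z⁻¹) z :=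
      (hdx.const_mul 2).mul hlog
    exact (h1.add h2).add hdy
  unfold theta
  rw [hD.deriv]
  have hTx := theta_S hx hzabs
  have hTy := theta_S hy hzabs
  have hS := S_split 2 hx (good_D hy) hzabs
  unfold Phi
  rw [hS, ← hTx, ← hTy]
  field_simp
  ring

lemma theta_w2 : ∀ w ∈ Set.Ioo (0:ℝ) (1/27),
    theta w2 w = Phi 0 2 (D cv) (fun j => 2 * cv j + D cw j) w := by
  intro z hz
  obtain ⟨hz0, hz1⟩ := hz
  have hzne : z ≠ 0 := ne_of_gt hz0
  have hzabs : |z| < 1/27 := by rw [abs_of_pos hz0]; exact hz1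
  have hdx := hasDerivAt_S good_cv hzabs
  have hdy := hasDerivAt_S good_cw hzabs
  have hlog := Real.hasDerivAt_log hzne
  have hD : HasDerivAt w2
      ((2 * Real.log z ^ 1) * z⁻¹
        + ((2 * (∑' j : ℕ, ((j:ℝ)+1) * cv j * z ^ j)) * Real.log z + (2 * S cv z) * z⁻¹)
        + (∑' j : ℕ, ((j:ℝ)+1) * cw j * z ^ j)) z := by
    have heq : w2 = fun w => Real.log w ^ 2 + 2 * S cv w * Real.log w + S cw w := by
      funext w
      rw [w2]
      rw [w1tilde_eq, w2tilde_eq]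
    rw [heq]
    have h1 : HasDerivAt (fun w => Real.log w ^ 2) ((2 * Real.log z ^ 1) * z⁻¹) z := by
      simpa [mul_comm, mul_assoc] using hlog.fun_pow 2
    have h2 : HasDerivAt (fun w => 2 * S cv w * Real.log w)
        ((2 * (∑' j : ℕ, ((j:ℝ)+1) * cv j * z ^ j)) * Real.log z + (2 * S cv z) * z⁻¹) z :=
      (hdx.const_mul 2).mul hlog
    exact (h1.add h2).add hdy
  unfold theta
  rw [hD.deriv]
  have hTx := theta_S good_cv hzabs
  have hTy := theta_S good_cw hzabs
  have hS := S_split 2 good_cv (good_D good_cw) hzabs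
  unfold Phi
  rw [hS, ← hTx, ← hTy]
  field_simp
  ring

noncomputable def X1 : ℕ → ℝ := D cv
noncomputable def Y1 : ℕ → ℝ := fun j => 2 * cv j + D cw j
noncomputable def X2 : ℕ → ℝ := D X1
noncomputable def Y2 : ℕ → ℝ := fun j => 2 * X1 j + D Y1 j
noncomputable def X3 : ℕ → ℝ := fun j => 3 * X2 j + X1 j
noncomputable def Y3 : ℕ → ℝ := fun j => 3 * Y2 j + Y1 j
noncomputable def X3' : ℕ → ℝ := D X3
noncomputable def Y3' : ℕ → ℝ := fun j => 2 * X3 j + D Y3 j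
noncomputable def X4 : ℕ → ℝ := fun j => 3 * X3' j + 2 * X3 j
noncomputable def Y4 : ℕ → ℝ := fun j => 3 * Y3' j + 2 * Y3 j
noncomputable def X2' : ℕ → ℝ := D X2
noncomputable def Y2' : ℕ → ℝ := fun j => 2 * X2 j + D Y2 j

lemma gX1 : Good X1 := good_D good_cv
lemma gY1 : Good Y1 := good_add (good_smul 2 good_cv) (good_D good_cw)
lemma gX2 : Good X2 := good_D gX1
lemma gY2 : Good Y2 := good_add (good_smul 2 gX1) (good_D gY1)
lemma gX3 : Good X3 := by
  have := good_add (good_smul 3 gX2) gX1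
  intro r h1 h2
  apply Summable.congr (this r h1 h2)
  intro j
  rfl
lemma gY3 : Good Y3 := by
  have := good_add (good_smul 3 gY2) gY1
  intro r h1 h2
  exact Summable.congr (this r h1 h2) (fun j => rfl)
lemma gX3' : Good X3' := good_D gX3
lemma gY3' : Good Y3' := good_add (good_smul 2 gX3) (good_D gY3)
lemma gX4 : Good X4 := good_add (good_smul 3 gX3') (good_smul 2 gX3)
lemma gY4 : Good Y4 := good_add (good_smul 3 gY3') (good_smul 2 gY3)
lemma gX2' : Good X2' := good_D gX2
lemma gY2' : Good Y2' := good_add (good_smul 2 gX2) (good_D gY2)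

lemma cv_zero : cv 0 = -6 := by
  norm_num [cv, localP2c_one]

lemma cw_zero : cw 0 = -18 := by
  have : localP2d 1 = 18 := by
    norm_num [localP2d, harmonicNum, Nat.factorial, Finset.sum_range_succ]
  norm_num [cw, this]

lemma seqX (j : ℕ) : X2' j + (econst 6 j + 3 * shiftc X4 j) = 0 := by
  cases j with
  | zero =>
    simp only [X2', X2, X1, D, econst, shiftc]
    rw [cv_zero]
    norm_num
  | succ n =>
    simp only [X2', X2, X1, X4, X3', X3, D, econst, shiftc]
    push_cast
    norm_num
    linear_combination R1 n

lemma seqY (j : ℕ) : Y2' j + (econst 54 j + 3 * shiftc Y4 j) = 0 := by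
  cases j with
  | zero =>
    simp only [Y2', Y2, Y1, X2, X1, D, econst, shiftc]
    rw [cv_zero, cw_zero]
    norm_num
  | succ n =>
    simp only [Y2', Y2, Y1, X2, X1, Y4, Y3', Y3, X3, D, econst, shiftc]
    push_cast
    norm_num
    linear_combination R2 n

lemma S_split' (a : ℝ) {u v : ℕ → ℝ} (hu : Good u) (hv : Good v) {z : ℝ} (hz : |z| < 1/27) :
    S (fun j => u j + a * v j) z = S u z + a * S v z := by
  have h := S_comb 1 a hu hv hz
  simpa using h

theorem picard_fuchs_w2 :
    ∀ z ∈ Set.Ioo (0 : ℝ) (1 / 27),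
      theta (theta (theta w2)) z + 3 * z * pf2 z = 0 := by
  intro z hz
  have hz0 := hz.1
  have hzabs : |z| < 1/27 := by rw [abs_of_pos hz0]; exact hz.2
  -- the chain of theta-iterates
  have hA : ∀ w ∈ Set.Ioo (0:ℝ) (1/27), theta w2 w = Phi 0 2 X1 Y1 w := theta_w2
  have hB : ∀ w ∈ Set.Ioo (0:ℝ) (1/27), theta (theta w2) w = Phi 2 0 X2 Y2 w :=
    fun w hw => (theta_congr hA hw).trans (theta_Phi 0 2 gX1 gY1 hw)
  have hC : ∀ w ∈ Set.Ioo (0:ℝ) (1/27),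
      theta (theta (theta w2)) w = Phi 0 0 X2' Y2' w :=
    fun w hw => (theta_congr hB hw).trans (theta_Phi 2 0 gX2 gY2 hw)
  have hP1 : ∀ w ∈ Set.Ioo (0:ℝ) (1/27), pf1 w = Phi 6 2 X3 Y3 w := by
    intro w hw
    have hwabs : |w| < 1/27 := by rw [abs_of_pos hw.1]; exact hw.2
    show 3 * theta (theta w2) w + theta w2 w = _
    rw [hB w hw, hA w hw]
    unfold Phi X3 Y3
    rw [S_split 3 gX2 gX1 hwabs, S_split 3 gY2 gY1 hwabs]
    ring
  have hTP1 : ∀ w ∈ Set.Ioo (0:ℝ) (1/27), theta pf1 w = Phi 2 0 X3' Y3' w :=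
    fun w hw => (theta_congr hP1 hw).trans (theta_Phi 6 2 gX3 gY3 hw)
  have hP2 : pf2 z = Phi 18 4 X4 Y4 z := by
    show 3 * theta pf1 z + 2 * pf1 z = _
    rw [hTP1 z hz, hP1 z hz]
    unfold Phi X4 Y4
    rw [S_comb 3 2 gX3' gX3 hzabs, S_comb 3 2 gY3' gY3 hzabs]
    ring
  rw [hC z hz, hP2]
  -- assemble the coefficient series
  have hXzero : S (fun j => X2' j + (econst 6 j + 3 * shiftc X4 j)) z = 0 := by
    have : (fun j => X2' j + (econst 6 j + 3 * shiftc X4 j)) = fun _ => (0:ℝ) :=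
      funext seqX
    rw [this]
    simp [S]
  have hYzero : S (fun j => Y2' j + (econst 54 j + 3 * shiftc Y4 j)) z = 0 := by
    have : (fun j => Y2' j + (econst 54 j + 3 * shiftc Y4 j)) = fun _ => (0:ℝ) :=
      funext seqY
    rw [this]
    simp [S]
  have hXgood : Good (fun j => econst 6 j + 3 * shiftc X4 j) :=
    good_add (good_econst 6) (good_smul 3 (good_shiftc gX4))
  have hYgood : Good (fun j => econst 54 j + 3 * shiftc Y4 j) :=
    good_add (good_econst 54) (good_smul 3 (good_shiftc gY4))
  have hX : S X2' z + (6 * z + 3 * (z * S X4 z)) = 0 := by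
    have h1 := S_split 1 gX2' hXgood hzabs
    simp only [one_mul] at h1
    have h2 := S_split' 3 (good_econst 6) (good_shiftc gX4) hzabs
    linarith [hXzero, h1, h2, S_econst 6 z, S_shiftc gX4 hzabs]
  have hY : S Y2' z + (54 * z + 3 * (z * S Y4 z)) = 0 := by
    have h1 := S_split 1 gY2' hYgood hzabs
    simp only [one_mul] at h1
    have h2 := S_split' 3 (good_econst 54) (good_shiftc gY4) hzabs
    linarith [hYzero, h1, h2, S_econst 54 z, S_shiftc gY4 hzabs]
  unfold Phi
  linear_combination (2 * Real.log z) * hX + hY
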